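/- Rado's order R = {(i,j) ∈ ℕ² : i < j}, with (i,j) ≤ (i',j') iff (i = i' and j ≤ j') or j < i', is a well quasiorder (it is well-founded and has no infinite antichain). -/
import Mathlib


/-- Rado's order: pairs (i,j) with i < j. -/
def Rado : Type := {p : ℕ × ℕ // p.1 < p.2}

def radoLe (a b : Rado) : Prop :=
  (a.1.1 = b.1.1 ∧ a.1.2 ≤ b.1.2) ∨ a.1.2 < b.1.1

lemma radoLe_trans {a b c : Rado} (h1 : radoLe a b) (h2 : radoLe b c) : radoLe a c := by
  rcases h1 with ⟨e1, l1⟩ | l1 <;> rcases h2 with ⟨e2, l2⟩ | l2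
  · exact Or.inl ⟨e1.trans e2, l1.trans l2⟩
  · exact Or.inr (lt_of_le_of_lt l1 l2)
  · exact Or.inr (e2 ▸ l1)
  · exact Or.inr (lt_trans (lt_trans l1 b.2) l2)

lemma rado_good (f : ℕ → Rado) : ∃ i j : ℕ, i < j ∧ radoLe (f i) (f j) := by
  set a : ℕ → ℕ := fun n => (f n).1.1 with ha
  set b : ℕ → ℕ := fun n => (f n).1.2 with hb
  by_cases h : ∃ j, 0 < j ∧ b 0 < a j
  · obtain ⟨j, hj, hlt⟩ := h
    exact ⟨0, j, hj, Or.inr hlt⟩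
  · push_neg at h
    have hba : ∀ n, a n ≤ b 0 := by
      intro n
      match n with
      | 0 => exact le_of_lt (f 0).2
      | n + 1 => exact h _ (Nat.succ_pos n)
    -- pigeonhole: some fiber of a is infinite
    obtain ⟨v, hv⟩ := Finite.exists_infinite_fiber
      (fun n => (⟨a n, Nat.lt_succ_of_le (hba n)⟩ : Fin (b 0 + 1)))
    set S : Set ℕ := (fun n => (⟨a n, Nat.lt_succ_of_le (hba n)⟩ : Fin (b 0 + 1))) ⁻¹' {v}
    have hS : S.Infinite := Set.infinite_coe_iff.mp hv
    have hSa : ∀ {n}, n ∈ S → a n = (v : ℕ) := by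
      intro n hn
      have : (⟨a n, Nat.lt_succ_of_le (hba n)⟩ : Fin (b 0 + 1)) = v := hn
      exact congrArg Fin.val this
    -- pick i in S minimizing b over S
    have hne : (b '' S).Nonempty := (hS.nonempty).image b
    have hmem : sInf (b '' S) ∈ b '' S := Nat.sInf_mem hne
    obtain ⟨i, hiS, hib⟩ := hmem
    obtain ⟨j, hjS, hij⟩ := hS.exists_gt i
    refine ⟨i, j, hij, Or.inl ⟨(hSa hiS).trans (hSa hjS).symm, ?_⟩⟩
    rw [show (f i).1.2 = b i from rfl, show (f j).1.2 = b j from rfl, hib]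
    exact Nat.sInf_le ⟨j, hjS, rfl⟩

theorem stmt_11 :
    (∀ f : ℕ → Rado, ∃ i j : ℕ, i < j ∧ radoLe (f i) (f j)) ∧
    (¬ ∃ f : ℕ → Rado, ∀ n, radoLe (f (n + 1)) (f n) ∧ ¬ radoLe (f n) (f (n + 1))) ∧
    (¬ ∃ f : ℕ → Rado, ∀ i j : ℕ, i ≠ j → ¬ radoLe (f i) (f j)) := by
  refine ⟨rado_good, ?_, ?_⟩
  · rintro ⟨f, hf⟩
    have chain : ∀ m n : ℕ, n ≤ m → radoLe (f m) (f n) := by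
      intro m n hnm
      induction m with
      | zero => obtain rfl := Nat.le_zero.mp hnm; exact Or.inl ⟨rfl, le_refl _⟩
      | succ k ih =>
        rcases Nat.eq_or_lt_of_le hnm with heq | hlt
        · subst heq; exact Or.inl ⟨rfl, le_refl _⟩
        · exact radoLe_trans (hf k).1 (ih (Nat.lt_succ_iff.mp hlt))
    obtain ⟨i, j, hij, hle⟩ := rado_good f
    exact (hf i).2 (radoLe_trans hle (chain j (i + 1) hij))
  · rintro ⟨f, hf⟩
    obtain ⟨i, j, hij, hle⟩ := rado_good f
    exact hf i j (Nat.ne_of_lt hij) hle
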